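/- Let X be an invertible object in a symmetric monoidal category with symmetry (twist) t_{X,X} : X ⊗ X → X ⊗ X. Then tr(id_X) = D(t_{X,X}) = tr(t_{X,X}), where D denotes the D-invariant of a self-map of the invertible object X ⊗ X. -/

import Mathlib

open CategoryTheory MonoidalCategory
open BraidedCategory

set_option linter.unusedSectionVars false
set_option maxHeartbeats 1000000

variable {C : Type*} [Category C] [MonoidalCategory C] [SymmetricCategory C]

/-- Left dual data for `X`. -/
structure LeftDualData (X : C) where
  Y : C
  α : 𝟙_ C ⟶ Y ⊗ X
  αhat : X ⊗ Y ⟶ 𝟙_ C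
  triangle₁ : (ρ_ X).inv ≫ (X ◁ α) ≫ (α_ X Y X).inv ≫ (αhat ▷ X) ≫ (λ_ X).hom = 𝟙 X
  triangle₂ : (λ_ Y).inv ≫ (α ▷ Y) ≫ (α_ Y X Y).hom ≫ (Y ◁ αhat) ≫ (ρ_ Y).hom = 𝟙 Y

/-- The trace of `f : X ⟶ X` with respect to a left dual of `X`. -/
def trOf {X : C} (D : LeftDualData X) (f : X ⟶ X) : 𝟙_ C ⟶ 𝟙_ C :=
  D.α ≫ (D.Y ◁ f) ≫ (β_ D.Y X).hom ≫ D.αhat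

/-- The `D`-invariant of `g : W ⟶ W` with respect to a chosen inverse `(V, δ)` of the
invertible object `W`. -/
def Dinv {W V : C} (δ : 𝟙_ C ≅ V ⊗ W) (g : W ⟶ W) : 𝟙_ C ⟶ 𝟙_ C :=
  δ.hom ≫ (V ◁ g) ≫ δ.inv





/-- scalar action -/
def sc (u : 𝟙_ C ⟶ 𝟙_ C) (W : C) : W ⟶ W := (λ_ W).inv ≫ u ▷ W ≫ (λ_ W).hom

lemma sc_natural (u : 𝟙_ C ⟶ 𝟙_ C) {A B : C} (h : A ⟶ B) : h ≫ sc u B = sc u A ≫ h := by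
  simp only [sc]
  calc h ≫ (λ_ B).inv ≫ u ▷ B ≫ (λ_ B).hom
      = (λ_ A).inv ≫ (𝟙_ C ◁ h ≫ u ▷ B) ≫ (λ_ B).hom := by simp
    _ = (λ_ A).inv ≫ (u ▷ A ≫ 𝟙_ C ◁ h) ≫ (λ_ B).hom := by rw [whisker_exchange]
    _ = ((λ_ A).inv ≫ u ▷ A ≫ (λ_ A).hom) ≫ h := by simp

lemma sc_unit (u : 𝟙_ C ⟶ 𝟙_ C) : sc u (𝟙_ C) = u := by
  simp [sc, unitors_equal, unitors_inv_equal]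

lemma slr (u : 𝟙_ C ⟶ 𝟙_ C) (W : C) : sc u W = (ρ_ W).inv ≫ W ◁ u ≫ (ρ_ W).hom := by
  have h1 : (u ▷ W) ≫ (β_ (𝟙_ C) W).hom = (β_ (𝟙_ C) W).hom ≫ (W ◁ u) :=
    braiding_naturality_left u W
  have h2 : (β_ (𝟙_ C) W).hom ≫ (ρ_ W).hom = (λ_ W).hom := braiding_rightUnitor W
  have h3 : (λ_ W).inv ≫ (β_ (𝟙_ C) W).hom = (ρ_ W).inv := by
    rw [← cancel_mono (ρ_ W).hom]; simp [h2]
  simp only [sc]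
  calc (λ_ W).inv ≫ u ▷ W ≫ (λ_ W).hom
      = (λ_ W).inv ≫ u ▷ W ≫ (β_ (𝟙_ C) W).hom ≫ (ρ_ W).hom := by rw [h2]
    _ = ((λ_ W).inv ≫ (β_ (𝟙_ C) W).hom) ≫ (W ◁ u) ≫ (ρ_ W).hom := by
        rw [reassoc_of% h1]; simp
    _ = (ρ_ W).inv ≫ W ◁ u ≫ (ρ_ W).hom := by rw [h3]

lemma sc_tensorL (u : 𝟙_ C ⟶ 𝟙_ C) (V W : C) : V ◁ sc u W = sc u (V ⊗ W) := by
  rw [slr, slr]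
  monoidal

lemma sc_tensorR (u : 𝟙_ C ⟶ 𝟙_ C) (V W : C) : (sc u W) ▷ V = sc u (W ⊗ V) := by
  simp only [sc]
  monoidal

lemma sc_comp (u v : 𝟙_ C ⟶ 𝟙_ C) (W : C) : sc u W ≫ sc v W = sc (u ≫ v) W := by
  simp [sc]

lemma sc_id (W : C) : sc (𝟙 (𝟙_ C)) W = 𝟙 W := by simp [sc]




lemma M_left {A B : C} (e : 𝟙_ C ≅ A ⊗ B) {U U' : C} (f : U ⟶ U') :
    f = (λ_ U).inv ≫ (e.hom ▷ U) ≫ (α_ A B U).hom ≫ (A ◁ (B ◁ f)) ≫ (α_ A B U').inv ≫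
      (e.inv ▷ U') ≫ (λ_ U').hom := by
  have h1 : (α_ A B U).hom ≫ (A ◁ (B ◁ f)) ≫ (α_ A B U').inv = (A ⊗ B) ◁ f := by
    simp [tensor_whiskerLeft]
  calc f = (λ_ U).inv ≫ (𝟙_ C ◁ f) ≫ (λ_ U').hom := by simp
    _ = (λ_ U).inv ≫ (𝟙_ C ◁ f ≫ e.hom ▷ U') ≫ (e.inv ▷ U') ≫ (λ_ U').hom := by simp
    _ = (λ_ U).inv ≫ (e.hom ▷ U ≫ (A ⊗ B) ◁ f) ≫ (e.inv ▷ U') ≫ (λ_ U').hom := by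
        rw [whisker_exchange]
    _ = _ := by rw [← h1]; simp

lemma whiskerLeft_cancel {A B : C} (e : 𝟙_ C ≅ A ⊗ B) {U U' : C} {f g : U ⟶ U'}
    (h : B ◁ f = B ◁ g) : f = g := by
  rw [M_left e f, M_left e g, h]

lemma M_right {A B : C} (e : 𝟙_ C ≅ B ⊗ A) {U U' : C} (f : U ⟶ U') :
    f = (ρ_ U).inv ≫ (U ◁ e.hom) ≫ (α_ U B A).inv ≫ ((f ▷ B) ▷ A) ≫ (α_ U' B A).hom ≫
      (U' ◁ e.inv) ≫ (ρ_ U').hom := by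
  have h1 : (α_ U B A).inv ≫ ((f ▷ B) ▷ A) ≫ (α_ U' B A).hom = f ▷ (B ⊗ A) := by
    simp [whiskerRight_tensor]
  calc f = (ρ_ U).inv ≫ (f ▷ 𝟙_ C) ≫ (ρ_ U').hom := by simp
    _ = (ρ_ U).inv ≫ (f ▷ 𝟙_ C ≫ U' ◁ e.hom) ≫ (U' ◁ e.inv) ≫ (ρ_ U').hom := by simp
    _ = (ρ_ U).inv ≫ (U ◁ e.hom ≫ f ▷ (B ⊗ A)) ≫ (U' ◁ e.inv) ≫ (ρ_ U').hom := by
        rw [← whisker_exchange]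
    _ = _ := by rw [← h1]; simp

lemma whiskerRight_cancel {A B : C} (e : 𝟙_ C ≅ B ⊗ A) {U U' : C} {f g : U ⟶ U'}
    (h : f ▷ B = g ▷ B) : f = g := by
  rw [M_right e f, M_right e g, h]




lemma bXX_inv (X : C) : (β_ X X).inv = (β_ X X).hom :=
  (SymmetricCategory.braiding_swap_eq_inv_braiding X X).symm

lemma unitor_beta_1 (X : C) : (λ_ X).inv ≫ (β_ (𝟙_ C) X).hom = (ρ_ X).inv := by
  rw [← cancel_mono (ρ_ X).hom]; simp [braiding_rightUnitor]

lemma unitor_beta_2 (X : C) : (β_ X (𝟙_ C)).inv ≫ (ρ_ X).hom = (λ_ X).hom := by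
  rw [← cancel_epi (β_ X (𝟙_ C)).hom]; simp [braiding_leftUnitor]

section Dual

variable {X Y : C} (ηi : 𝟙_ C ≅ Y ⊗ X) (ε : X ⊗ Y ⟶ 𝟙_ C)

lemma hA (X Y : C) : (α_ X Y X).hom ≫ (X ◁ (β_ Y X).hom) =
    (β_ (X ⊗ Y) X).hom ≫ (α_ X X Y).inv ≫ ((β_ X X).inv ▷ Y) ≫ (α_ X X Y).hom := by
  rw [braiding_tensor_left_hom, bXX_inv]
  simp only [Category.assoc, Iso.hom_inv_id_assoc]
  rw [← comp_whiskerRight_assoc, SymmetricCategory.symmetry]; simp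

lemma hD (X Y : C) : (X ◁ (β_ Y X).hom) ≫ (α_ X X Y).inv ≫ ((β_ X X).inv ▷ Y) ≫
    (α_ X X Y).hom = (α_ X Y X).inv ≫ (β_ (X ⊗ Y) X).hom := by
  rw [braiding_tensor_left_hom, bXX_inv]; simp

/-- The kink-cancellation zigzag: `(η' ▷ X) ≫ (X ◁ ε') = id` where `η' = η ≫ β`,
`ε' = β ≫ ε`. -/
lemma Z1 (tri1 : (ρ_ X).inv ≫ (X ◁ ηi.hom) ≫ (α_ X Y X).inv ≫ (ε ▷ X) ≫ (λ_ X).hom = 𝟙 X) :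
    (λ_ X).inv ≫ ((ηi.hom ≫ (β_ Y X).hom) ▷ X) ≫ (α_ X Y X).hom ≫
      (X ◁ ((β_ Y X).hom ≫ ε)) ≫ (ρ_ X).hom = 𝟙 X := by
  have hT : (X ◁ ηi.hom) ≫ (α_ X Y X).inv ≫ (ε ▷ X) = (ρ_ X).hom ≫ (λ_ X).inv := by
    rw [← cancel_epi (ρ_ X).inv, ← cancel_mono (λ_ X).hom]
    simpa using tri1
  calc (λ_ X).inv ≫ ((ηi.hom ≫ (β_ Y X).hom) ▷ X) ≫ (α_ X Y X).hom ≫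
      (X ◁ ((β_ Y X).hom ≫ ε)) ≫ (ρ_ X).hom
      = (λ_ X).inv ≫ (ηi.hom ▷ X) ≫ ((β_ Y X).hom ▷ X) ≫
        ((α_ X Y X).hom ≫ (X ◁ (β_ Y X).hom)) ≫ (X ◁ ε) ≫ (ρ_ X).hom := by
        simp only [comp_whiskerRight, MonoidalCategory.whiskerLeft_comp, Category.assoc]
    _ = (λ_ X).inv ≫ (ηi.hom ▷ X) ≫ (((β_ Y X).hom ▷ X) ≫ (β_ (X ⊗ Y) X).hom) ≫
        ((α_ X X Y).inv ≫ ((β_ X X).inv ▷ Y) ≫ (α_ X X Y).hom) ≫ (X ◁ ε) ≫ (ρ_ X).hom := by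
        rw [hA]; simp only [Category.assoc]
    _ = (λ_ X).inv ≫ ((ηi.hom ▷ X) ≫ (β_ (Y ⊗ X) X).hom) ≫ (X ◁ (β_ Y X).hom) ≫
        ((α_ X X Y).inv ≫ ((β_ X X).inv ▷ Y) ≫ (α_ X X Y).hom) ≫ (X ◁ ε) ≫ (ρ_ X).hom := by
        rw [braiding_naturality_left ((β_ Y X).hom) X]; simp only [Category.assoc]
    _ = (λ_ X).inv ≫ (β_ (𝟙_ C) X).hom ≫ (X ◁ ηi.hom) ≫ ((X ◁ (β_ Y X).hom) ≫
        (α_ X X Y).inv ≫ ((β_ X X).inv ▷ Y) ≫ (α_ X X Y).hom) ≫ (X ◁ ε) ≫ (ρ_ X).hom := by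
        rw [braiding_naturality_left ηi.hom X]; simp only [Category.assoc]
    _ = (λ_ X).inv ≫ (β_ (𝟙_ C) X).hom ≫ (X ◁ ηi.hom) ≫ (α_ X Y X).inv ≫
        ((β_ (X ⊗ Y) X).hom ≫ (X ◁ ε)) ≫ (ρ_ X).hom := by
        rw [hD]; simp only [Category.assoc]
    _ = (λ_ X).inv ≫ (β_ (𝟙_ C) X).hom ≫ ((X ◁ ηi.hom) ≫ (α_ X Y X).inv ≫
        (ε ▷ X)) ≫ (β_ (𝟙_ C) X).hom ≫ (ρ_ X).hom := by
        rw [← braiding_naturality_left ε X]; simp only [Category.assoc]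
    _ = ((λ_ X).inv ≫ (β_ (𝟙_ C) X).hom) ≫ ((ρ_ X).hom ≫ (λ_ X).inv) ≫
        (β_ (𝟙_ C) X).hom ≫ (ρ_ X).hom := by
        rw [hT]; simp only [Category.assoc]
    _ = 𝟙 X := by
        rw [unitor_beta_1, braiding_rightUnitor]; simp

end Dual


section Dual2

variable {X Y : C} (ηi : 𝟙_ C ≅ Y ⊗ X) (ε : X ⊗ Y ⟶ 𝟙_ C)

/-- rearranged triangle -/
lemma tri_rearr (tri1 : (ρ_ X).inv ≫ (X ◁ ηi.hom) ≫ (α_ X Y X).inv ≫ (ε ▷ X) ≫ (λ_ X).hom = 𝟙 X) :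
    (X ◁ ηi.hom) ≫ (α_ X Y X).inv ≫ (ε ▷ X) = (ρ_ X).hom ≫ (λ_ X).inv := by
  rw [← cancel_epi (ρ_ X).inv, ← cancel_mono (λ_ X).hom]
  simpa using tri1

lemma whiskerLeft_inv_eq
    (tri1 : (ρ_ X).inv ≫ (X ◁ ηi.hom) ≫ (α_ X Y X).inv ≫ (ε ▷ X) ≫ (λ_ X).hom = 𝟙 X) :
    X ◁ ηi.inv = (α_ X Y X).inv ≫ (ε ▷ X) ≫ (λ_ X).hom ≫ (ρ_ X).inv := by
  rw [← cancel_epi (X ◁ ηi.hom)]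
  have h := tri_rearr ηi ε tri1
  calc X ◁ ηi.hom ≫ X ◁ ηi.inv = 𝟙 _ := by
        rw [← MonoidalCategory.whiskerLeft_comp]; simp
    _ = ((X ◁ ηi.hom) ≫ (α_ X Y X).inv ≫ (ε ▷ X)) ≫ (λ_ X).hom ≫ (ρ_ X).inv := by
        rw [h]; simp
    _ = X ◁ ηi.hom ≫ (α_ X Y X).inv ≫ ε ▷ X ≫ (λ_ X).hom ≫ (ρ_ X).inv := by
        simp only [Category.assoc]

lemma ev_isIso
    (tri1 : (ρ_ X).inv ≫ (X ◁ ηi.hom) ≫ (α_ X Y X).inv ≫ (ε ▷ X) ≫ (λ_ X).hom = 𝟙 X) :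
    IsIso ε := by
  have h := tri_rearr ηi ε tri1
  have h1 : ε ▷ X = (α_ X Y X).hom ≫ (X ◁ ηi.inv) ≫ (ρ_ X).hom ≫ (λ_ X).inv := by
    rw [whiskerLeft_inv_eq ηi ε tri1]; simp
  have h2 : IsIso (ε ▷ X) := by rw [h1]; infer_instance
  have h3 : IsIso ((ε ▷ X) ▷ Y) := inferInstance
  rw [M_right (ηi ≪≫ β_ Y X) ε]
  infer_instance

end Dual2

lemma scalar_slide (w : 𝟙_ C ⟶ 𝟙_ C) (X : C) :
    (w ▷ X) ≫ (λ_ X).hom ≫ (ρ_ X).inv = (λ_ X).hom ≫ (ρ_ X).inv ≫ (X ◁ w) := by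
  have h := slr w X
  simp only [sc] at h
  rw [← cancel_epi (λ_ X).inv, reassoc_of% h]
  simp

section Dual3

variable {X Y : C} (ηi : 𝟙_ C ≅ Y ⊗ X) (ε : X ⊗ Y ⟶ 𝟙_ C)

/-- consequence of Z1 : formula for `X ◁ (β ≫ ε)` -/
lemma XwL_ev
    (tri1 : (ρ_ X).inv ≫ (X ◁ ηi.hom) ≫ (α_ X Y X).inv ≫ (ε ▷ X) ≫ (λ_ X).hom = 𝟙 X)
    [IsIso ε] :
    X ◁ ((β_ Y X).hom ≫ ε) =
      (α_ X Y X).inv ≫ (inv (ηi.hom ≫ (β_ Y X).hom) ▷ X) ≫ (λ_ X).hom ≫ (ρ_ X).inv := by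
  have hz := Z1 ηi ε tri1
  have hη' : IsIso (ηi.hom ≫ (β_ Y X).hom) := inferInstance
  rw [← cancel_mono (ρ_ X).hom, ← cancel_epi (α_ X Y X).hom,
      ← cancel_epi ((ηi.hom ≫ (β_ Y X).hom) ▷ X), ← cancel_epi (λ_ X).inv]
  simp only [Category.assoc] at hz ⊢
  trans (𝟙 X)
  · exact hz
  · simp only [Iso.hom_inv_id_assoc]
    rw [← comp_whiskerRight_assoc, IsIso.hom_inv_id]
    simp

/-- `ε' ≫ η' = η⁻¹ ≫ ε⁻¹` -/
lemma ev_coev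
    (tri1 : (ρ_ X).inv ≫ (X ◁ ηi.hom) ≫ (α_ X Y X).inv ≫ (ε ▷ X) ≫ (λ_ X).hom = 𝟙 X)
    [IsIso ε] :
    ((β_ Y X).hom ≫ ε) ≫ (ηi.hom ≫ (β_ Y X).hom) = ηi.inv ≫ inv ε := by
  apply whiskerLeft_cancel ηi
  rw [show X ◁ (((β_ Y X).hom ≫ ε) ≫ (ηi.hom ≫ (β_ Y X).hom)) =
      (X ◁ ((β_ Y X).hom ≫ ε)) ≫ (X ◁ (ηi.hom ≫ (β_ Y X).hom)) from
      MonoidalCategory.whiskerLeft_comp _ _ _,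
    XwL_ev ηi ε tri1,
    show X ◁ (ηi.inv ≫ inv ε) = (X ◁ ηi.inv) ≫ (X ◁ inv ε) from
      MonoidalCategory.whiskerLeft_comp _ _ _,
    whiskerLeft_inv_eq ηi ε tri1]
  simp only [Category.assoc]
  rw [cancel_epi (α_ X Y X).inv]
  rw [← cancel_epi ((inv ε) ▷ X)]
  calc (inv ε ▷ X) ≫ (inv (ηi.hom ≫ (β_ Y X).hom) ▷ X) ≫ (λ_ X).hom ≫ (ρ_ X).inv ≫
        (X ◁ (ηi.hom ≫ (β_ Y X).hom))
      = ((inv ε ≫ inv (ηi.hom ≫ (β_ Y X).hom)) ▷ X) ≫ (λ_ X).hom ≫ (ρ_ X).inv ≫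
        (X ◁ (ηi.hom ≫ (β_ Y X).hom)) := by
        simp only [comp_whiskerRight, Category.assoc]
    _ = (λ_ X).hom ≫ (ρ_ X).inv ≫ (X ◁ (inv ε ≫ inv (ηi.hom ≫ (β_ Y X).hom))) ≫
        (X ◁ (ηi.hom ≫ (β_ Y X).hom)) := by
        rw [reassoc_of% scalar_slide (inv ε ≫ inv (ηi.hom ≫ (β_ Y X).hom)) X]
    _ = (λ_ X).hom ≫ (ρ_ X).inv ≫ (X ◁ inv ε) := by
        rw [← MonoidalCategory.whiskerLeft_comp]
        simp
    _ = (inv ε ▷ X) ≫ (ε ▷ X) ≫ (λ_ X).hom ≫ (ρ_ X).inv ≫ (X ◁ inv ε) := by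
        rw [← comp_whiskerRight_assoc, IsIso.inv_hom_id]; simp

/-- the square of the kink scalar is one -/
lemma u_sq
    (tri1 : (ρ_ X).inv ≫ (X ◁ ηi.hom) ≫ (α_ X Y X).inv ≫ (ε ▷ X) ≫ (λ_ X).hom = 𝟙 X)
    [IsIso ε] :
    (ηi.hom ≫ (β_ Y X).hom ≫ ε) ≫ (ηi.hom ≫ (β_ Y X).hom ≫ ε) = 𝟙 (𝟙_ C) := by
  have h := ev_coev ηi ε tri1
  calc (ηi.hom ≫ (β_ Y X).hom ≫ ε) ≫ (ηi.hom ≫ (β_ Y X).hom ≫ ε)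
      = ηi.hom ≫ (((β_ Y X).hom ≫ ε) ≫ (ηi.hom ≫ (β_ Y X).hom)) ≫ ε := by
        simp only [Category.assoc]
    _ = 𝟙 (𝟙_ C) := by rw [h]; simp

/-- `β_{X,Y} ≫ η⁻¹ = ε ≫ u` -/
lemma hH
    (tri1 : (ρ_ X).inv ≫ (X ◁ ηi.hom) ≫ (α_ X Y X).inv ≫ (ε ▷ X) ≫ (λ_ X).hom = 𝟙 X)
    [IsIso ε] :
    (β_ X Y).hom ≫ ηi.inv = ε ≫ (ηi.hom ≫ (β_ Y X).hom ≫ ε) := by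
  rw [← cancel_epi (ηi.hom ≫ (β_ Y X).hom)]
  calc (ηi.hom ≫ (β_ Y X).hom) ≫ (β_ X Y).hom ≫ ηi.inv = 𝟙 (𝟙_ C) := by
        simp only [Category.assoc, SymmetricCategory.symmetry_assoc]; simp
    _ = (ηi.hom ≫ (β_ Y X).hom) ≫ ε ≫ (ηi.hom ≫ (β_ Y X).hom ≫ ε) := by
        rw [← u_sq ηi ε tri1]; simp only [Category.assoc]

end Dual3

lemma Dinv_sc {V W : C} (δ : 𝟙_ C ≅ V ⊗ W) (d : 𝟙_ C ⟶ 𝟙_ C) : Dinv δ (sc d W) = d := by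
  simp only [Dinv, sc_tensorL]
  rw [reassoc_of% (sc_natural d δ.hom)]
  simp [sc_unit]

lemma KEY {V W : C} (δ : 𝟙_ C ≅ V ⊗ W) (g : W ⟶ W) : g = sc (Dinv δ g) W := by
  apply whiskerLeft_cancel (δ ≪≫ β_ V W)
  rw [sc_tensorL]
  have h2 : V ◁ g = δ.inv ≫ Dinv δ g ≫ δ.hom := by
    simp only [Dinv]; simp
  rw [h2, ← sc_unit (Dinv δ g), ← sc_natural]
  simp only [sc_unit, Iso.inv_hom_id_assoc]

section Dual4

variable {X Y : C} (ηi : 𝟙_ C ≅ Y ⊗ X) (ε : X ⊗ Y ⟶ 𝟙_ C)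

lemma NAT1 :
    (ηi.hom ▷ X) ≫ (α_ Y X X).hom ≫ (Y ◁ (β_ X X).hom) =
      (β_ X (𝟙_ C)).inv ≫ (X ◁ ηi.hom) ≫ (α_ X Y X).inv ≫ ((β_ X Y).hom ▷ X) ≫
        (α_ Y X X).hom := by
  have n1 := braiding_naturality_right X ηi.hom
  have h2 : ηi.hom ▷ X = (β_ X (𝟙_ C)).inv ≫ (X ◁ ηi.hom) ≫ (β_ X (Y ⊗ X)).hom := by
    rw [n1]; simp
  rw [h2, braiding_tensor_right_hom]
  simp only [Category.assoc, Iso.inv_hom_id_assoc]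
  rw [← MonoidalCategory.whiskerLeft_comp, SymmetricCategory.symmetry]
  simp

lemma inner_eq
    (tri1 : (ρ_ X).inv ≫ (X ◁ ηi.hom) ≫ (α_ X Y X).inv ≫ (ε ▷ X) ≫ (λ_ X).hom = 𝟙 X)
    [IsIso ε] :
    (λ_ X).inv ≫ (ηi.hom ▷ X) ≫ (α_ Y X X).hom ≫ (Y ◁ (β_ X X).hom) ≫ (α_ Y X X).inv ≫
      (ηi.inv ▷ X) ≫ (λ_ X).hom = sc (ηi.hom ≫ (β_ Y X).hom ≫ ε) X := by
  rw [reassoc_of% (NAT1 ηi)]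
  simp only [Category.assoc, Iso.hom_inv_id_assoc]
  rw [← comp_whiskerRight_assoc, hH ηi ε tri1, comp_whiskerRight]
  simp only [Category.assoc]
  rw [reassoc_of% (tri_rearr ηi ε tri1)]
  rw [reassoc_of% (unitor_beta_2 X)]
  simp only [sc, Iso.inv_hom_id_assoc]

lemma stepA
    (tri1 : (ρ_ X).inv ≫ (X ◁ ηi.hom) ≫ (α_ X Y X).inv ≫ (ε ▷ X) ≫ (λ_ X).hom = 𝟙 X)
    [IsIso ε] :
    (β_ X X).hom = sc (ηi.hom ≫ (β_ Y X).hom ≫ ε) (X ⊗ X) := by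
  set δ₁ : 𝟙_ C ≅ (Y ⊗ Y) ⊗ (X ⊗ X) :=
    ηi ≪≫ whiskerLeftIso Y ((λ_ X).symm ≪≫ whiskerRightIso ηi X ≪≫ α_ Y X X) ≪≫
      (α_ Y Y (X ⊗ X)).symm with hδ₁
  have exp : Dinv δ₁ (β_ X X).hom =
      ηi.hom ≫ (Y ◁ ((λ_ X).inv ≫ (ηi.hom ▷ X) ≫ (α_ Y X X).hom ≫ (Y ◁ (β_ X X).hom) ≫
        (α_ Y X X).inv ≫ (ηi.inv ▷ X) ≫ (λ_ X).hom)) ≫ ηi.inv := by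
    simp only [Dinv, hδ₁, Iso.trans_hom, Iso.trans_inv, Iso.symm_hom, Iso.symm_inv,
      whiskerLeftIso_hom, whiskerLeftIso_inv, whiskerRightIso_hom, whiskerRightIso_inv,
      tensor_whiskerLeft, MonoidalCategory.whiskerLeft_comp, Category.assoc,
      Iso.inv_hom_id_assoc, Iso.hom_inv_id_assoc]
  rw [KEY δ₁ (β_ X X).hom, exp, inner_eq ηi ε tri1]
  rw [sc_tensorL, reassoc_of% (sc_natural (ηi.hom ≫ (β_ Y X).hom ≫ ε) ηi.hom)]
  simp [sc_unit]

end Dual4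

lemma sc_natural' (u : 𝟙_ C ⟶ 𝟙_ C) {A B D : C} (h : A ⟶ B) (g : B ⟶ D) :
    h ≫ sc u B ≫ g = sc u A ≫ h ≫ g := by
  rw [reassoc_of% (sc_natural u h)]

lemma sc_comp' (u v : 𝟙_ C ⟶ 𝟙_ C) (W : C) {D : C} (g : W ⟶ D) :
    sc u W ≫ sc v W ≫ g = sc (u ≫ v) W ≫ g := by
  rw [reassoc_of% (sc_comp u v W)]

lemma tri_rearr' {X Y : C} (a : 𝟙_ C ⟶ Y ⊗ X) (ε : X ⊗ Y ⟶ 𝟙_ C)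
    (tri1 : (ρ_ X).inv ≫ (X ◁ a) ≫ (α_ X Y X).inv ≫ (ε ▷ X) ≫ (λ_ X).hom = 𝟙 X) :
    (X ◁ a) ≫ (α_ X Y X).inv ≫ (ε ▷ X) = (ρ_ X).hom ≫ (λ_ X).inv := by
  rw [← cancel_epi (ρ_ X).inv, ← cancel_mono (λ_ X).hom]
  simpa using tri1

lemma trOf_sc {W : C} (D : LeftDualData W) (u : 𝟙_ C ⟶ 𝟙_ C) :
    trOf D (sc u W) = u ≫ trOf D (𝟙 W) := by
  simp only [trOf, sc_tensorL, MonoidalCategory.whiskerLeft_id, Category.id_comp]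
  rw [reassoc_of% (sc_natural u D.α), sc_unit]

lemma tr_id_eq_one {W A : C} (DW : LeftDualData W) (e : 𝟙_ C ≅ W ⊗ A)
    (hβ : (β_ W W).hom = 𝟙 (W ⊗ W)) : trOf DW (𝟙 W) = 𝟙 (𝟙_ C) := by
  apply whiskerRight_cancel e
  have h1 : (β_ DW.Y W).hom ▷ W = (β_ (DW.Y ⊗ W) W).hom ≫ (α_ W DW.Y W).inv := by
    rw [braiding_tensor_left_hom, hβ]; simp
  have h2 := braiding_naturality_left DW.α W
  have h3 := tri_rearr' DW.α DW.αhat DW.triangle₁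
  simp only [trOf, MonoidalCategory.whiskerLeft_id, Category.id_comp, id_whiskerRight,
    comp_whiskerRight, Category.assoc]
  rw [h1]
  simp only [Category.assoc]
  rw [reassoc_of% h2, h3, reassoc_of% (braiding_rightUnitor W)]
  simp

lemma bWW {X : C} (u : 𝟙_ C ⟶ 𝟙_ C) (hs : (β_ X X).hom = sc u (X ⊗ X))
    (huu : u ≫ u = 𝟙 (𝟙_ C)) : (β_ (X ⊗ X) (X ⊗ X)).hom = 𝟙 ((X ⊗ X) ⊗ (X ⊗ X)) := by
  rw [braiding_tensor_left_hom]
  simp only [braiding_tensor_right_hom]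
  simp only [hs]
  simp only [MonoidalCategory.whiskerLeft_comp, comp_whiskerRight, sc_tensorR, sc_tensorL,
    Category.assoc]
  simp only [sc_natural', sc_natural]
  simp only [sc_comp', sc_comp, Category.assoc, huu, Category.comp_id, Category.id_comp]
  simp only [sc_id, Category.id_comp]
  monoidal

/-- For an invertible object `X` with twist `t_{X,X} = β_{X,X}`, one has
`tr(id_X) = D(t_{X,X}) = tr(t_{X,X})`, where `D` is the `D`-invariant of the self-map
`t_{X,X}` of the invertible object `X ⊗ X`. -/
theorem tr_id_eq_D_twist_eq_tr_twist {X V : C} (DX : LeftDualData X) (hX : IsIso DX.α)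
    (DXX : LeftDualData (X ⊗ X)) (δ : 𝟙_ C ≅ V ⊗ (X ⊗ X)) :
    trOf DX (𝟙 X) = Dinv δ (β_ X X).hom ∧
    trOf DX (𝟙 X) = trOf DXX (β_ X X).hom := by
  let ηi : 𝟙_ C ≅ DX.Y ⊗ X := asIso DX.α
  have hhom : ηi.hom = DX.α := rfl
  have tri1 : (ρ_ X).inv ≫ (X ◁ ηi.hom) ≫ (α_ X DX.Y X).inv ≫ (DX.αhat ▷ X) ≫
      (λ_ X).hom = 𝟙 X := by rw [hhom]; exact DX.triangle₁
  haveI hε : IsIso DX.αhat := ev_isIso ηi DX.αhat tri1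
  have hs := stepA ηi DX.αhat tri1
  have huu := u_sq ηi DX.αhat tri1
  have htr : trOf DX (𝟙 X) = ηi.hom ≫ (β_ DX.Y X).hom ≫ DX.αhat := by
    rw [hhom]; simp [trOf]
  refine ⟨?_, ?_⟩
  · rw [htr, hs, Dinv_sc]
  · rw [htr, hs, trOf_sc]
    have hW := bWW _ hs huu
    have e : 𝟙_ C ≅ (X ⊗ X) ⊗ (DX.Y ⊗ DX.Y) :=
      (ηi ≪≫ whiskerLeftIso DX.Y ((λ_ X).symm ≪≫ whiskerRightIso ηi X ≪≫ α_ DX.Y X X) ≪≫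
        (α_ DX.Y DX.Y (X ⊗ X)).symm) ≪≫ β_ (DX.Y ⊗ DX.Y) (X ⊗ X)
    rw [tr_id_eq_one DXX e hW, Category.comp_id]
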